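/- Suppose POVMs M, N on a d-dimensional Hilbert space satisfy: for every density matrix ρ, S_M(ρ) = log d implies S_N(ρ) = log d. Then every element of N lies in the real span of the elements of M. -/

import Mathlib

open Matrix BigOperators
open scoped Classical ComplexOrder

/-- A (finitely indexed) POVM on `ℂ^d`: positive semidefinite elements summing to the identity. -/
def IsPOVM {d : ℕ} {ι : Type*} [Fintype ι] (M : ι → Matrix (Fin d) (Fin d) ℂ) : Prop :=
  (∀ i, (M i).PosSemidef) ∧ ∑ i, M i = 1

/-- A density matrix: positive semidefinite with unit trace. -/
def IsDensity {d : ℕ} (ρ : Matrix (Fin d) (Fin d) ℂ) : Prop :=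
  ρ.PosSemidef ∧ ρ.trace = 1

/-- Outcome probability `tr(M_i ρ)` (real part). -/
noncomputable def prob {d : ℕ} {ι : Type*} [Fintype ι] (M : ι → Matrix (Fin d) (Fin d) ℂ)
    (ρ : Matrix (Fin d) (Fin d) ℂ) (i : ι) : ℝ := ((M i * ρ).trace).re

/-- Measured relative entropy `D_M(ρ‖σ) = Σ_i p_i log (p_i / q_i)`. -/
noncomputable def Dmeas {d : ℕ} {ι : Type*} [Fintype ι] (M : ι → Matrix (Fin d) (Fin d) ℂ)
    (ρ σ : Matrix (Fin d) (Fin d) ℂ) : ℝ :=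
  ∑ i, prob M ρ i * Real.log (prob M ρ i / prob M σ i)

/-- Observational entropy `S_M(ρ) = -Σ_i p_i log (p_i / V_i)` with `V_i = tr M_i`. -/
noncomputable def Sobs {d : ℕ} {ι : Type*} [Fintype ι] (M : ι → Matrix (Fin d) (Fin d) ℂ)
    (ρ : Matrix (Fin d) (Fin d) ℂ) : ℝ :=
  -∑ i, prob M ρ i * Real.log (prob M ρ i / ((M i).trace).re)

/-- `N` is a stochastic post-processing of `M` (`N ≫ M`). -/
def StochPost {d : ℕ} {ι κ : Type*} [Fintype ι] [Fintype κ]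
    (N : κ → Matrix (Fin d) (Fin d) ℂ) (M : ι → Matrix (Fin d) (Fin d) ℂ) : Prop :=
  ∃ Λ : κ → ι → ℝ, (∀ j i, 0 ≤ Λ j i) ∧ (∀ i, ∑ j, Λ j i = 1) ∧
    ∀ j, N j = ∑ i, Λ j i • M i

section Aux
variable {d : ℕ}

private lemma psd_trace_re_nonneg {A : Matrix (Fin d) (Fin d) ℂ} (hA : A.PosSemidef) :
    0 ≤ (A.trace).re := by
  have h : ∀ i, 0 ≤ (A i i).re := by
    intro i
    have h2 := hA.dotProduct_mulVec_nonneg (Pi.single i 1)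
    rw [show A *ᵥ Pi.single i 1 = fun k => A k i * 1 by ext k; simp] at h2
    have h3 : dotProduct (star (Pi.single i (1:ℂ))) (fun k => A k i * 1) = A i i := by
      simp [dotProduct, Pi.single_apply, apply_ite]
    rw [h3] at h2
    exact (Complex.le_def.mp h2).1
  rw [Matrix.trace, Complex.re_sum]
  exact Finset.sum_nonneg fun i _ => h i

open scoped MatrixOrder Matrix.Norms.L2Operator in
private lemma psd_trace_mul_re_nonneg {A B : Matrix (Fin d) (Fin d) ℂ}
    (hA : A.PosSemidef) (hB : B.PosSemidef) : 0 ≤ ((A * B).trace).re := by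
  obtain ⟨C, rfl⟩ := CStarAlgebra.nonneg_iff_eq_star_mul_self.mp hA.nonneg
  rw [star_eq_conjTranspose]
  have h : (Cᴴ * C * B).trace = (C * B * Cᴴ).trace := by
    rw [mul_assoc, trace_mul_comm]
  rw [h]
  exact psd_trace_re_nonneg (hB.mul_mul_conjTranspose_same C)

private lemma psd_smul_real {A : Matrix (Fin d) (Fin d) ℂ} (hA : A.PosSemidef) {r : ℝ}
    (hr : 0 ≤ r) : ((r : ℂ) • A).PosSemidef := by
  rw [posSemidef_iff_dotProduct_mulVec]
  constructor
  · have h1 := hA.1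
    unfold Matrix.IsHermitian at *
    rw [conjTranspose_smul, h1]
    simp [Complex.star_def, Complex.conj_ofReal]
  · intro v
    rw [smul_mulVec, dotProduct_smul, smul_eq_mul]
    exact mul_nonneg (by exact_mod_cast Complex.zero_le_real.mpr hr) (hA.dotProduct_mulVec_nonneg v)

private lemma psd_one_add {x : Matrix (Fin d) (Fin d) ℂ} (hx : x.IsHermitian) (s : ℝ)
    (hs : |s| * (∑ i, ∑ j, ‖x i j‖) ≤ 1) :
    (1 + (s : ℂ) • x).PosSemidef := by
  have hSx : 0 ≤ ∑ i, ∑ j, ‖x i j‖ :=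
    Finset.sum_nonneg fun i _ => Finset.sum_nonneg fun j _ => norm_nonneg _
  rw [posSemidef_iff_dotProduct_mulVec]
  constructor
  · unfold Matrix.IsHermitian
    rw [conjTranspose_add, conjTranspose_smul, conjTranspose_one, hx.eq]
    simp [Complex.star_def, Complex.conj_ofReal]
  · intro v
    rw [add_mulVec, smul_mulVec, one_mulVec, dotProduct_add, dotProduct_smul]
    set Q : ℂ := dotProduct (star v) (x *ᵥ v) with hQ
    set Sv : ℝ := ∑ i, Complex.normSq (v i) with hSv
    have hSvnn : 0 ≤ Sv := Finset.sum_nonneg fun i _ => Complex.normSq_nonneg _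
    have hvv : dotProduct (star v) v = (Sv : ℂ) := by
      simp [dotProduct, hSv, Complex.normSq_eq_conj_mul_self]
    have hQreal : star Q = Q := by
      rw [hQ]
      simp only [dotProduct, mulVec, dotProduct, star_sum, star_mul', Finset.mul_sum, star_star,
        Pi.star_apply]
      rw [Finset.sum_comm]
      refine Finset.sum_congr rfl fun i _ => Finset.sum_congr rfl fun j _ => ?_
      have hxs : star (x j i) = x i j := by
        have h4 := congrFun (congrFun hx.eq i) j
        rwa [conjTranspose_apply] at h4
      rw [hxs]
      ring
    have hQre : Q = (Q.re : ℂ) := (Complex.conj_eq_iff_re.mp hQreal).symm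
    have habs : ‖Q‖ ≤ (∑ i, ∑ j, ‖x i j‖) * Sv := by
      rw [hQ]
      simp only [dotProduct]
      calc ‖∑ i, star v i * (x *ᵥ v) i‖
          ≤ ∑ i, ‖star v i * (x *ᵥ v) i‖ := norm_sum_le _ _
        _ ≤ ∑ i, ∑ j, ‖x i j‖ * Sv := by
            apply Finset.sum_le_sum
            intro i _
            rw [norm_mul]
            simp only [mulVec, dotProduct]
            calc ‖star v i‖ * ‖∑ j, x i j * v j‖
                ≤ ‖star v i‖ * ∑ j, ‖x i j * v j‖ :=
                  mul_le_mul_of_nonneg_left (norm_sum_le _ _) (norm_nonneg _)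
              _ = ∑ j, ‖v i‖ * (‖x i j‖ * ‖v j‖) := by
                  rw [Finset.mul_sum]
                  refine Finset.sum_congr rfl fun j _ => ?_
                  rw [norm_mul]
                  have h5 : ‖star v i‖ = ‖v i‖ := by
                    simp [Pi.star_apply, Complex.star_def, Complex.norm_conj]
                  rw [h5]
              _ ≤ ∑ j, ‖x i j‖ * Sv := by
                  apply Finset.sum_le_sum
                  intro j _
                  have h1 : ‖v i‖ ^ 2 ≤ Sv :=
                    (Complex.sq_norm _).le.trans (Finset.single_le_sum
                      (fun k _ => Complex.normSq_nonneg (v k)) (Finset.mem_univ i))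
                  have h2 : ‖v j‖ ^ 2 ≤ Sv :=
                    (Complex.sq_norm _).le.trans (Finset.single_le_sum
                      (fun k _ => Complex.normSq_nonneg (v k)) (Finset.mem_univ j))
                  have h3 : ‖v i‖ * ‖v j‖ ≤ Sv := by
                    nlinarith [norm_nonneg (v i), norm_nonneg (v j),
                      sq_nonneg (‖v i‖ - ‖v j‖)]
                  nlinarith [norm_nonneg (x i j)]
        _ = (∑ i, ∑ j, ‖x i j‖) * Sv := by
            rw [Finset.sum_mul]
            exact Finset.sum_congr rfl fun i _ => (Finset.sum_mul _ _ _).symm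
    have hQrebound : |Q.re| ≤ (∑ i, ∑ j, ‖x i j‖) * Sv :=
      (Complex.abs_re_le_norm Q).trans habs
    rw [hvv, smul_eq_mul, hQre]
    have hcast : (Sv : ℂ) + (s : ℂ) * (Q.re : ℂ) = ((Sv + s * Q.re : ℝ) : ℂ) := by
      push_cast; ring
    rw [hcast, Complex.zero_le_real]
    have habs2 : |s * Q.re| ≤ |s| * ((∑ i, ∑ j, ‖x i j‖) * Sv) := by
      rw [abs_mul]
      exact mul_le_mul_of_nonneg_left hQrebound (abs_nonneg s)
    have hna := neg_abs_le (s * Q.re)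
    nlinarith [abs_nonneg s]

end Aux

set_option maxHeartbeats 1600000 in
theorem stmt6 {d m n : ℕ} (hd : 0 < d) (M : Fin m → Matrix (Fin d) (Fin d) ℂ)
    (N : Fin n → Matrix (Fin d) (Fin d) ℂ) (hM : IsPOVM M) (hN : IsPOVM N)
    (h : ∀ ρ : Matrix (Fin d) (Fin d) ℂ, IsDensity ρ →
      Sobs M ρ = Real.log d → Sobs N ρ = Real.log d) :
    ∀ j, N j ∈ Submodule.span ℝ (Set.range M) := by
  intro j0
  by_contra hj0
  have hd0 : (0:ℝ) < (d:ℝ) := by exact_mod_cast hd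
  have hdne : (d:ℝ) ≠ 0 := ne_of_gt hd0
  have hdCne : ((d:ℕ):ℂ) ≠ 0 := Nat.cast_ne_zero.mpr hd.ne'
  set V := Submodule.span ℝ (Set.range M) with hV
  -- a separating real-linear functional
  have hne : Submodule.Quotient.mk (p := V) (N j0) ≠ 0 := by
    rwa [Ne, Submodule.Quotient.mk_eq_zero]
  obtain ⟨φ, hφ⟩ : ∃ φ : Module.Dual ℝ (Matrix (Fin d) (Fin d) ℂ ⧸ V),
      φ (Submodule.Quotient.mk (N j0)) ≠ 0 := by
    by_contra hall
    push_neg at hall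
    exact hne ((Module.forall_dual_apply_eq_zero_iff ℝ _).mp hall)
  set f : Matrix (Fin d) (Fin d) ℂ →ₗ[ℝ] ℝ := φ.comp V.mkQ with hf
  have hfV : ∀ A ∈ V, f A = 0 := by
    intro A hA
    have : V.mkQ A = 0 := by
      rw [Submodule.mkQ_apply, Submodule.Quotient.mk_eq_zero]; exact hA
    simp [hf, LinearMap.comp_apply, this]
  have hfj : f (N j0) ≠ 0 := hφ
  have hfM : ∀ i, f (M i) = 0 := fun i => hfV _ (Submodule.subset_span ⟨i, rfl⟩)
  have h1V : (1 : Matrix (Fin d) (Fin d) ℂ) ∈ V := by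
    rw [← hM.2]
    exact Submodule.sum_mem _ fun i _ => Submodule.subset_span ⟨i, rfl⟩
  have hf1 : f 1 = 0 := hfV _ h1V
  -- the representing matrix y and its Hermitian part x
  set y : Matrix (Fin d) (Fin d) ℂ := Matrix.of fun jj ii =>
    ((f (Matrix.single ii jj 1) : ℝ) : ℂ)
      - ((f (Matrix.single ii jj Complex.I) : ℝ) : ℂ) * Complex.I with hy
  have hrep : ∀ A : Matrix (Fin d) (Fin d) ℂ, ((A * y).trace).re = f A := by
    intro A
    have e1 : ((A * y).trace).re = ∑ i, ∑ j, (A i j * y j i).re := by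
      rw [Matrix.trace, Complex.re_sum]
      refine Finset.sum_congr rfl fun i _ => ?_
      rw [Matrix.diag_apply, Matrix.mul_apply, Complex.re_sum]
    have e2 : f A = ∑ i, ∑ j, ((A i j).re * f (Matrix.single i j 1)
        + (A i j).im * f (Matrix.single i j Complex.I)) := by
      conv_lhs => rw [matrix_eq_sum_single A]
      rw [map_sum]
      refine Finset.sum_congr rfl fun i _ => ?_
      rw [map_sum]
      refine Finset.sum_congr rfl fun j _ => ?_
      have e3 : Matrix.single i j (A i j)
          = (A i j).re • Matrix.single i j (1:ℂ) + (A i j).im • Matrix.single i j Complex.I := by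
        rw [smul_single, smul_single, ← single_add]
        congr 1
        rw [Complex.real_smul, Complex.real_smul, mul_one, Complex.re_add_im]
      rw [e3, map_add, LinearMap.map_smul, LinearMap.map_smul, smul_eq_mul, smul_eq_mul]
    rw [e1, e2]
    refine Finset.sum_congr rfl fun i _ => Finset.sum_congr rfl fun j _ => ?_
    rw [hy]
    simp only [Matrix.of_apply, Complex.mul_re, Complex.sub_re, Complex.sub_im, Complex.ofReal_re,
      Complex.ofReal_im, Complex.mul_im, Complex.I_re, Complex.I_im]
    ring
  set x : Matrix (Fin d) (Fin d) ℂ := ((2:ℂ)⁻¹) • (y + yᴴ) with hx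
  have hxh : x.IsHermitian := by
    unfold Matrix.IsHermitian
    rw [hx, conjTranspose_smul, conjTranspose_add, conjTranspose_conjTranspose, add_comm yᴴ y]
    congr 1
    simp
  have hfx : ∀ A : Matrix (Fin d) (Fin d) ℂ, A.IsHermitian → ((A * x).trace).re = f A := by
    intro A hA
    have key : ((A * yᴴ).trace).re = ((A * y).trace).re := by
      have e : (A * yᴴ).trace = star ((A * y).trace) := by
        rw [← Matrix.trace_conjTranspose, conjTranspose_mul, hA.eq, trace_mul_comm]
      rw [e, Complex.star_def, Complex.conj_re]
    have e : A * x = (2:ℂ)⁻¹ • (A * y + A * yᴴ) := by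
      rw [hx, Matrix.mul_smul, mul_add]
    rw [e, trace_smul, smul_eq_mul, trace_add]
    rw [show ((2:ℂ)⁻¹) = (((2:ℝ)⁻¹ : ℝ) : ℂ) by push_cast; ring]
    rw [Complex.re_ofReal_mul, Complex.add_re, key, hrep]
    ring
  have htrx : x.trace = 0 := by
    have hre : x.trace.re = 0 := by
      have := hfx 1 Matrix.isHermitian_one
      rwa [one_mul, hf1] at this
    have him : x.trace.im = 0 := by
      have e : star x.trace = x.trace := by
        conv_lhs => rw [← Matrix.trace_conjTranspose, hxh.eq]
      exact Complex.conj_eq_iff_im.mp e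
    exact Complex.ext hre him
  set Sx : ℝ := ∑ i, ∑ j, ‖x i j‖ with hSxdef
  have hSxnn : 0 ≤ Sx :=
    Finset.sum_nonneg fun i _ => Finset.sum_nonneg fun j _ => norm_nonneg _
  set ε : ℝ := (Sx + 1)⁻¹ with hεdef
  have hεpos : 0 < ε := inv_pos.mpr (by linarith)
  have hεS : ε * Sx ≤ 1 := by
    rw [hεdef]
    rw [inv_mul_le_iff₀ (by linarith)]
    nlinarith
  have hbound : ∀ s : ℝ, |s| = ε → (1 + (s:ℂ) • x).PosSemidef := fun s hs =>
    psd_one_add hxh s (by rw [hs]; exact hεS)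
  have hpsd1 : (1 + ((ε:ℝ):ℂ) • x).PosSemidef := hbound ε (abs_of_pos hεpos)
  have hpsd2 : (1 + ((-ε:ℝ):ℂ) • x).PosSemidef := hbound (-ε) (by rw [abs_neg]; exact abs_of_pos hεpos)
  have hcastd : ((d:ℕ):ℂ)⁻¹ = (((d:ℝ)⁻¹ : ℝ) : ℂ) := by push_cast; ring
  set σ : Matrix (Fin d) (Fin d) ℂ := ((d:ℕ):ℂ)⁻¹ • (1 + ((ε:ℝ):ℂ) • x) with hσdef
  set τ : Matrix (Fin d) (Fin d) ℂ := ((d:ℕ):ℂ)⁻¹ • (1 + ((-ε:ℝ):ℂ) • x) with hτdef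
  have hσpsd : σ.PosSemidef := by
    rw [hσdef, hcastd]
    exact psd_smul_real hpsd1 (by positivity)
  have hτpsd : τ.PosSemidef := by
    rw [hτdef, hcastd]
    exact psd_smul_real hpsd2 (by positivity)
  have hσtr : σ.trace = 1 := by
    rw [hσdef, trace_smul, trace_add, trace_smul, htrx, trace_one, Fintype.card_fin]
    simp [hdCne]
  -- the general trace formula
  have htr : ∀ (s : ℝ) (A : Matrix (Fin d) (Fin d) ℂ), A.IsHermitian →
      ((A * (((d:ℕ):ℂ)⁻¹ • (1 + ((s:ℝ):ℂ) • x))).trace).re = (A.trace.re + s * f A) / d := by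
    intro s A hA
    have e : A * (((d:ℕ):ℂ)⁻¹ • (1 + ((s:ℝ):ℂ) • x))
        = ((d:ℕ):ℂ)⁻¹ • (A + ((s:ℝ):ℂ) • (A * x)) := by
      rw [Matrix.mul_smul, mul_add, mul_one, Matrix.mul_smul]
    rw [e, trace_smul, smul_eq_mul, hcastd, Complex.re_ofReal_mul, trace_add, Complex.add_re,
      trace_smul, smul_eq_mul, Complex.re_ofReal_mul, hfx A hA]
    field_simp
  have hprobM : ∀ i, prob M σ i = ((M i).trace).re / d := by
    intro i
    show ((M i * σ).trace).re = _
    rw [hσdef, htr ε (M i) (hM.1 i).1, hfM i]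
    ring
  have hVsum : ∑ i, ((M i).trace).re = (d:ℝ) := by
    rw [← Complex.re_sum, ← Matrix.trace_sum, hM.2, trace_one, Fintype.card_fin]
    simp
  have hSM : Sobs M σ = Real.log d := by
    unfold Sobs
    have e : ∀ i : Fin m, prob M σ i * Real.log (prob M σ i / ((M i).trace).re)
        = -(((M i).trace).re / d * Real.log d) := by
      intro i
      rw [hprobM i]
      by_cases hVi : ((M i).trace).re = 0
      · simp [hVi]
      · have e1 : ((M i).trace).re / d / ((M i).trace).re = 1 / (d:ℝ) := by
          rw [div_div, mul_comm, ← div_div, div_self hVi]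
        rw [e1, one_div, Real.log_inv]
        ring
    rw [Finset.sum_congr rfl (fun i _ => e i)]
    rw [Finset.sum_neg_distrib, neg_neg, ← Finset.sum_mul, ← Finset.sum_div, hVsum]
    field_simp
  have hSN := h σ ⟨hσpsd, hσtr⟩ hSM
  -- N-side quantities
  have hqW : ∀ j, prob N σ j = (((N j).trace).re + ε * f (N j)) / d := by
    intro j
    show ((N j * σ).trace).re = _
    rw [hσdef, htr ε (N j) (hN.1 j).1]
  have hWnn : ∀ j, 0 ≤ ((N j).trace).re := fun j => psd_trace_re_nonneg (hN.1 j)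
  have hqnn : ∀ j, 0 ≤ prob N σ j := fun j => psd_trace_mul_re_nonneg (hN.1 j) hσpsd
  have hqle : ∀ j, prob N σ j ≤ 2 * ((N j).trace).re / d := by
    intro j
    have h0 : (0:ℝ) ≤ ((N j * τ).trace).re := psd_trace_mul_re_nonneg (hN.1 j) hτpsd
    rw [hτdef, htr (-ε) (N j) (hN.1 j).1] at h0
    have h1 : 0 ≤ ((N j).trace).re + (-ε) * f (N j) := by
      rcases div_nonneg_iff.mp h0 with ⟨ha, _⟩ | ⟨_, hb⟩
      · exact ha
      · linarith
    rw [hqW j]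
    rw [div_le_div_iff₀ hd0 hd0]
    nlinarith
  have hWsum : ∑ j, ((N j).trace).re = (d:ℝ) := by
    rw [← Complex.re_sum, ← Matrix.trace_sum, hN.2, trace_one, Fintype.card_fin]
    simp
  have hfNsum : ∑ j, f (N j) = 0 := by
    rw [← map_sum, hN.2, hf1]
  have hqsum : ∑ j, prob N σ j = 1 := by
    rw [Finset.sum_congr rfl (fun j _ => hqW j), ← Finset.sum_div]
    rw [Finset.sum_add_distrib, hWsum, ← Finset.mul_sum, hfNsum]
    field_simp
    ring
  -- unfold Sobs N σ
  simp only [Sobs] at hSN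
  have hsum : ∑ j, prob N σ j * Real.log (prob N σ j / ((N j).trace).re) = -Real.log d := by
    linarith
  -- the support set
  set s : Finset (Fin n) := Finset.univ.filter (fun j => 0 < prob N σ j) with hsdef
  have hq0 : ∀ j, j ∉ s → prob N σ j = 0 := by
    intro j hj
    rw [hsdef, Finset.mem_filter] at hj
    push_neg at hj
    exact le_antisymm (hj (Finset.mem_univ j)) (hqnn j)
  have hWpos : ∀ j ∈ s, 0 < ((N j).trace).re := by
    intro j hj
    rcases (hWnn j).lt_or_eq with hlt | heq
    · exact hlt
    · exfalso
      have h1 := hqle j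
      rw [← heq] at h1
      have h2 : 0 < prob N σ j := (Finset.mem_filter.mp hj).2
      rw [mul_zero, zero_div] at h1
      linarith
  have hsum_s : ∑ j ∈ s, prob N σ j * Real.log (prob N σ j / ((N j).trace).re)
      = ∑ j, prob N σ j * Real.log (prob N σ j / ((N j).trace).re) := by
    apply Finset.sum_subset (Finset.filter_subset _ _)
    intro j _ hj
    rw [hq0 j hj, zero_mul]
  have hqs1 : ∑ j ∈ s, prob N σ j = 1 := by
    rw [← hqsum]
    apply Finset.sum_subset (Finset.filter_subset _ _)
    intro j _ hj
    exact hq0 j hj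
  have hws : ∑ j ∈ s, ((N j).trace).re ≤ (d:ℝ) := by
    rw [← hWsum]
    exact Finset.sum_le_sum_of_subset_of_nonneg (Finset.subset_univ s) fun j _ _ => hWnn j
  -- split the log
  have hsplit : ∀ j ∈ s, prob N σ j * Real.log (prob N σ j / ((N j).trace).re)
      = prob N σ j * Real.log (prob N σ j * d / ((N j).trace).re)
        - prob N σ j * Real.log d := by
    intro j hj
    have hqj : 0 < prob N σ j := (Finset.mem_filter.mp hj).2
    have hWj := hWpos j hj
    have e : prob N σ j / ((N j).trace).re
        = (prob N σ j * d / ((N j).trace).re) / d := by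
      field_simp
    rw [e, Real.log_div (by positivity) hdne, mul_sub]
  -- per-term lower bound
  have hterm : ∀ j ∈ s, prob N σ j - ((N j).trace).re / d
      ≤ prob N σ j * Real.log (prob N σ j * d / ((N j).trace).re) := by
    intro j hj
    have hqj : 0 < prob N σ j := (Finset.mem_filter.mp hj).2
    have hWj := hWpos j hj
    have hlog := Real.log_le_sub_one_of_pos
      (show 0 < ((N j).trace).re / (prob N σ j * d) by positivity)
    have e : prob N σ j * d / ((N j).trace).re
        = (((N j).trace).re / (prob N σ j * d))⁻¹ := by
      field_simp
    rw [e, Real.log_inv]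
    have h2 := mul_le_mul_of_nonneg_left hlog hqj.le
    have e2 : prob N σ j * (((N j).trace).re / (prob N σ j * d) - 1)
        = ((N j).trace).re / d - prob N σ j := by
      field_simp
    nlinarith
  -- strict bound at j0
  have hkey : 0 < ∑ j ∈ s, prob N σ j * Real.log (prob N σ j * d / ((N j).trace).re) := by
    have hεf : ε * f (N j0) ≠ 0 := mul_ne_zero (ne_of_gt hεpos) hfj
    by_cases hq : 0 < prob N σ j0
    · -- j0 ∈ s; strict inequality at j0
      have hj0s : j0 ∈ s := by rw [hsdef, Finset.mem_filter]; exact ⟨Finset.mem_univ _, hq⟩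
      have hWj := hWpos j0 hj0s
      have hne1 : ((N j0).trace).re / (prob N σ j0 * d) ≠ 1 := by
        intro hc
        have hWq : ((N j0).trace).re = prob N σ j0 * d :=
          (div_eq_one_iff_eq (by positivity : prob N σ j0 * (d:ℝ) ≠ 0)).mp hc
        have hthis := hqW j0
        rw [hWq] at hthis
        have h' := (eq_div_iff hdne).mp hthis
        exact hεf (by linarith)
      have hstrict : prob N σ j0 - ((N j0).trace).re / d
          < prob N σ j0 * Real.log (prob N σ j0 * d / ((N j0).trace).re) := by
        have hlog := Real.log_lt_sub_one_of_pos
          (show 0 < ((N j0).trace).re / (prob N σ j0 * d) by positivity) hne1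
        have e : prob N σ j0 * d / ((N j0).trace).re
            = (((N j0).trace).re / (prob N σ j0 * d))⁻¹ := by
          field_simp
        rw [e, Real.log_inv]
        have h2 := mul_lt_mul_of_pos_left hlog hq
        have e2 : prob N σ j0 * (((N j0).trace).re / (prob N σ j0 * d) - 1)
            = ((N j0).trace).re / d - prob N σ j0 := by
          field_simp
        nlinarith
      have hlt : ∑ j ∈ s, (prob N σ j - ((N j).trace).re / d)
          < ∑ j ∈ s, prob N σ j * Real.log (prob N σ j * d / ((N j).trace).re) :=
        Finset.sum_lt_sum hterm ⟨j0, hj0s, hstrict⟩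
      have hge : 0 ≤ ∑ j ∈ s, (prob N σ j - ((N j).trace).re / d) := by
        rw [Finset.sum_sub_distrib, hqs1, ← Finset.sum_div]
        have : (∑ j ∈ s, ((N j).trace).re) / d ≤ 1 := by
          rw [div_le_one hd0]; exact hws
        linarith
      linarith
    · -- j0 ∉ s, and W j0 > 0
      have hq0' : prob N σ j0 = 0 := le_antisymm (not_lt.mp hq) (hqnn j0)
      have hj0ns : j0 ∉ s := by
        rw [hsdef, Finset.mem_filter]
        push_neg
        intro _
        rw [hq0']
      have hWj0 : 0 < ((N j0).trace).re := by
        rcases (hWnn j0).lt_or_eq with hlt | heq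
        · exact hlt
        · exfalso
          have hthis := hqW j0
          rw [hq0', ← heq] at hthis
          have h' := (eq_div_iff hdne).mp hthis
          exact hεf (by linarith)
      have hws2 : ∑ j ∈ s, ((N j).trace).re ≤ (d:ℝ) - ((N j0).trace).re := by
        have h1 : ∑ j ∈ insert j0 s, ((N j).trace).re ≤ (d:ℝ) := by
          rw [← hWsum]
          exact Finset.sum_le_sum_of_subset_of_nonneg (Finset.subset_univ _)
            fun j _ _ => hWnn j
        rw [Finset.sum_insert hj0ns] at h1
        linarith
      have hge : 0 < ∑ j ∈ s, (prob N σ j - ((N j).trace).re / d) := by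
        rw [Finset.sum_sub_distrib, hqs1, ← Finset.sum_div]
        have h2 : (∑ j ∈ s, ((N j).trace).re) / d ≤ ((d:ℝ) - ((N j0).trace).re) / d :=
          (div_le_div_iff_of_pos_right hd0).mpr hws2
        have h2' : ((d:ℝ) - ((N j0).trace).re) / d = 1 - ((N j0).trace).re / d := by
          field_simp
        have h3 : 0 < ((N j0).trace).re / d := by positivity
        rw [h2'] at h2
        linarith
      calc (0:ℝ) < ∑ j ∈ s, (prob N σ j - ((N j).trace).re / d) := hge
        _ ≤ ∑ j ∈ s, prob N σ j * Real.log (prob N σ j * d / ((N j).trace).re) :=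
          Finset.sum_le_sum hterm
  -- conclude
  have hfinal : ∑ j, prob N σ j * Real.log (prob N σ j / ((N j).trace).re)
      = (∑ j ∈ s, prob N σ j * Real.log (prob N σ j * d / ((N j).trace).re)) - Real.log d := by
    rw [← hsum_s, Finset.sum_congr rfl hsplit, Finset.sum_sub_distrib, ← Finset.sum_mul, hqs1,
      one_mul]
  rw [hfinal] at hsum
  linarith
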